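/- Let I ⊆ S be a stable monomial ideal. (a) Every monomial w ∈ I can be written in exactly one way as w = u·m where m is a minimal monomial generator of I and u is a monomial with max(supp(m)) ≤ min(supp(u)) (the Eliahou–Kervaire decomposition). (b) If m_i is a minimal generator of I and j < max(supp(m_i)), and x_j·m_i = u·m_k is the decomposition from (a), then max(supp(m_k)) ≤ max(supp(m_i)). Consequently, with its minimal generators ordered by decreasing lexicographic order, I is crit-monotone: A_{k} ⊆ A_{i} whenever m_k is the generator appearing in the decomposition of x_j·m_i for j ∈ A_i. -/

import Mathlib

open MvPolynomial

private lemma mono_mem_iff {k : Type} [Field k] {n : ℕ} (S : Set (Fin n →₀ ℕ)) (α : Fin n →₀ ℕ) :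
    (monomial α (1 : k)) ∈ Ideal.span ((fun s => monomial s (1 : k)) '' S) ↔ ∃ s ∈ S, s ≤ α := by
  rw [mem_ideal_span_monomial_image]
  simp [support_monomial]

private lemma finsupp_eq_of_le_of_sum {n : ℕ} {f g : Fin n →₀ ℕ} (h : f ≤ g)
    (hs : ∑ s, f s = ∑ s, g s) : f = g := by
  ext s
  exact (Finset.sum_eq_sum_iff_of_le (fun i _ => h i)).1 hs s (Finset.mem_univ s)

private lemma ek_subB {n t : ℕ} (m : Fin t → (Fin n →₀ ℕ)) (i j : Fin t) (β γ : Fin n →₀ ℕ)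
    (heq : β + m i = γ + m j)
    (hEK : ∀ a ∈ (m j).support, ∀ c ∈ γ.support, a ≤ c)
    (hlex : toLex (m j) < toLex (m i)) : m j ≤ m i := by
  obtain ⟨p, hbelow, hp⟩ := Finsupp.Lex.lt_iff.mp hlex
  simp only [ofLex_toLex] at hbelow hp
  have hpγ : p ∈ γ.support := by
    rw [Finsupp.mem_support_iff]
    intro h0
    have h1 : β p + m i p = γ p + m j p := by
      have := congrArg (fun f : Fin n →₀ ℕ => f p) heq
      simpa using this
    rw [h0] at h1
    omega
  rw [Finsupp.le_def]
  intro s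
  rcases lt_trichotomy s p with hs | hs | hs
  · exact (hbelow s hs).le
  · subst hs; exact hp.le
  · have : m j s = 0 := by
      by_contra h0
      exact absurd (hEK s (Finsupp.mem_support_iff.mpr h0) p hpγ) (not_le.mpr hs)
    simp [this]

private lemma ek_exists {n t : ℕ} (m : Fin t → (Fin n →₀ ℕ))
    (hstable' : ∀ γ : Fin n →₀ ℕ, (∃ i, m i ≤ γ) → ∀ b ∈ γ.support,
       (∀ l ∈ γ.support, l ≤ b) →
       ∀ jj : Fin n, jj < b → ∃ i, m i ≤ γ + Finsupp.single jj 1 - Finsupp.single b 1)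
    (α : Fin n →₀ ℕ) (hα : ∃ i, m i ≤ α) :
    ∃ i, m i ≤ α ∧ ∀ a ∈ (m i).support, ∀ b ∈ (α - m i).support, a ≤ b := by
  classical
  set S1 : Finset (Fin t) := Finset.univ.filter (fun i => m i ≤ α) with hS1
  have hne : S1.Nonempty := by
    obtain ⟨i, hi⟩ := hα
    exact ⟨i, by simp [hS1, hi]⟩
  obtain ⟨i₀, hi₀S, hi₀min⟩ := S1.exists_min_image (fun i => ∑ s, m i s) hne
  set S2 : Finset (Fin t) := S1.filter (fun j => ∑ s, m j s = ∑ s, m i₀ s) with hS2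
  have hS2ne : S2.Nonempty := ⟨i₀, by simp [hS2, hi₀S]⟩
  obtain ⟨i, hiS2, himax⟩ := S2.exists_max_image (fun j => toLex (m j)) hS2ne
  have hiS1 : i ∈ S1 := (Finset.mem_filter.mp hiS2).1
  have hile : m i ≤ α := by simpa [hS1] using hiS1
  have hideg : ∑ s, m i s = ∑ s, m i₀ s := (Finset.mem_filter.mp hiS2).2
  refine ⟨i, hile, ?_⟩
  by_contra hcon
  push_neg at hcon
  obtain ⟨a, ha, b, hb, hba⟩ := hcon
  have hsupne : (m i).support.Nonempty := ⟨a, ha⟩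
  set M := (m i).support.max' hsupne with hM
  have hMs : M ∈ (m i).support := (m i).support.max'_mem hsupne
  have hMmax : ∀ l ∈ (m i).support, l ≤ M := fun l hl => (m i).support.le_max' l hl
  have hbM : b < M := lt_of_lt_of_le hba (hMmax a ha)
  have hbne : b ≠ M := ne_of_lt hbM
  obtain ⟨l, hl⟩ := hstable' (m i) ⟨i, le_rfl⟩ M hMs hMmax b hbM
  set γ' := m i + Finsupp.single b 1 - Finsupp.single M 1 with hγ'
  have hMpos : 1 ≤ (m i) M := Nat.one_le_iff_ne_zero.mpr (Finsupp.mem_support_iff.mp hMs)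
  have hγ'app : ∀ s, γ' s = (m i) s + (if s = b then 1 else 0) - (if s = M then 1 else 0) := by
    intro s
    simp [hγ', Finsupp.tsub_apply, Finsupp.add_apply, Finsupp.single_apply, eq_comm]
  have hαb : (m i) b < α b := by
    have := Finsupp.mem_support_iff.mp hb
    rw [Finsupp.tsub_apply] at this
    omega
  have hγ'le : γ' ≤ α := by
    rw [Finsupp.le_def]
    intro s
    have h1 := hγ'app s
    have h2 : (m i) s ≤ α s := hile s
    rcases eq_or_ne s b with rfl | hsb
    · simp [hbne] at h1; omega
    · rcases eq_or_ne s M with rfl | hsM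
      · simp [hbne.symm] at h1; omega
      · simp [hsb, hsM] at h1; omega
  have hcancel : γ' + Finsupp.single M 1 = m i + Finsupp.single b 1 := by
    apply tsub_add_cancel_of_le
    rw [Finsupp.le_def]
    intro s
    rcases eq_or_ne s M with rfl | hsM
    · simp [Finsupp.single_apply, Finsupp.add_apply]; omega
    · simp [Finsupp.single_apply, Ne.symm hsM]
  have hdegγ' : ∑ s, γ' s = ∑ s, m i s := by
    have := congrArg (fun f : Fin n →₀ ℕ => ∑ s, f s) hcancel
    simp only [Finsupp.add_apply, Finset.sum_add_distrib] at this
    have hsM : ∑ s, (Finsupp.single M 1 : Fin n →₀ ℕ) s = 1 := by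
      simp [Finsupp.single_apply]
    have hsb : ∑ s, (Finsupp.single b 1 : Fin n →₀ ℕ) s = 1 := by
      simp [Finsupp.single_apply]
    omega
  have hlα : m l ≤ α := le_trans hl hγ'le
  have hlS1 : l ∈ S1 := by simp [hS1, hlα]
  have hldeg : ∑ s, m l s ≤ ∑ s, γ' s :=
    Finset.sum_le_sum (fun s _ => hl s)
  have hldeg' : ∑ s, m i₀ s ≤ ∑ s, m l s := hi₀min l hlS1
  have hleq : ∑ s, m l s = ∑ s, γ' s := by omega
  have hml : m l = γ' := finsupp_eq_of_le_of_sum hl hleq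
  have hlS2 : l ∈ S2 := by
    rw [hS2, Finset.mem_filter]
    exact ⟨hlS1, by omega⟩
  have hlexle : toLex (m l) ≤ toLex (m i) := himax l hlS2
  have hlexgt : toLex (m i) < toLex γ' := by
    rw [Finsupp.Lex.lt_iff]
    refine ⟨b, ?_, ?_⟩
    · intro q hq
      have h1 := hγ'app q
      have hqb : q ≠ b := ne_of_lt hq
      have hqM : q ≠ M := ne_of_lt (lt_trans hq hbM)
      simp only [ofLex_toLex]
      simp [hqb, hqM] at h1
      omega
    · have h1 := hγ'app b
      simp only [ofLex_toLex]
      simp [hbne] at h1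
      omega
  rw [hml] at hlexle
  exact absurd hlexle (not_le.mpr hlexgt)

private lemma ek_C {n t : ℕ} (m : Fin t → (Fin n →₀ ℕ))
    (hmin : ∀ i j : Fin t, i ≠ j → ¬ m i ≤ m j)
    (hsort : ∀ i j : Fin t, i < j → toLex (m j) < toLex (m i))
    (κ l : Fin t) (g : Fin n) (hlκ : l < κ)
    (hle : m l ≤ Finsupp.single g 1 + m κ) :
    ∃ q, g < q ∧ q ∈ (m κ).support := by
  by_contra hcon
  push_neg at hcon
  have hz : ∀ q, g < q → (m κ) q = 0 := fun q hq => by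
    by_contra h0
    exact absurd (hcon q hq) (by simp [Finsupp.mem_support_iff, h0])
  obtain ⟨p, hbelow, hp⟩ := Finsupp.Lex.lt_iff.mp (hsort l κ hlκ)
  simp only [ofLex_toLex] at hbelow hp
  have hlep : ∀ s, m l s ≤ (if g = s then 1 else 0) + m κ s := by
    intro s
    have := hle s
    simpa [Finsupp.add_apply, Finsupp.single_apply] using this
  have hpg : p = g := by
    by_contra hne
    have := hlep p
    simp [Ne.symm hne] at this
    omega
  subst hpg
  have : m κ ≤ m l := by
    rw [Finsupp.le_def]
    intro s
    rcases lt_trichotomy s p with hs | hs | hs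
    · exact (hbelow s hs).le
    · subst hs; exact hp.le
    · rw [hz s hs]; omega
  exact hmin κ l (ne_of_gt hlκ) this

private lemma ek_D {n t : ℕ} (m : Fin t → (Fin n →₀ ℕ))
    (hmin : ∀ i j : Fin t, i ≠ j → ¬ m i ≤ m j)
    (hsort : ∀ i j : Fin t, i < j → toLex (m j) < toLex (m i))
    (hstable' : ∀ γ : Fin n →₀ ℕ, (∃ i, m i ≤ γ) → ∀ b ∈ γ.support,
       (∀ l ∈ γ.support, l ≤ b) →
       ∀ jj : Fin n, jj < b → ∃ i, m i ≤ γ + Finsupp.single jj 1 - Finsupp.single b 1)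
    (κ : Fin t) (g b : Fin n) (hb : b ∈ (m κ).support) (hgb : g < b) :
    ∃ l, l < κ ∧ m l ≤ Finsupp.single g 1 + m κ := by
  set α := Finsupp.single g 1 + m κ with hα
  have hκα : m κ ≤ α := le_add_self
  obtain ⟨l, hlle, hEK⟩ := ek_exists m hstable' α ⟨κ, hκα⟩
  have hlκ : l ≠ κ := by
    rintro rfl
    have hβ : α - m l = Finsupp.single g 1 := by
      rw [hα, add_tsub_cancel_right]
    have hgsupp : g ∈ (α - m l).support := by
      rw [hβ, Finsupp.support_single_ne_zero g one_ne_zero]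
      exact Finset.mem_singleton_self g
    exact absurd (hEK b hb g hgsupp) (not_le.mpr hgb)
  have hlex : toLex (m κ) < toLex (m l) := by
    rcases lt_trichotomy (toLex (m l)) (toLex (m κ)) with h | h | h
    · have heq : Finsupp.single g 1 + m κ = (α - m l) + m l :=
        (tsub_add_cancel_of_le hlle).symm
      have := ek_subB m κ l (Finsupp.single g 1) (α - m l) heq hEK h
      exact absurd this (hmin l κ hlκ)
    · exact absurd (le_of_eq (toLex_inj.mp h)) (hmin l κ hlκ)
    · exact h
  have hlt : l < κ := by
    rcases lt_trichotomy l κ with h | h | h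
    · exact h
    · exact absurd h hlκ
    · exact absurd (hsort κ l h) (not_lt.mpr hlex.le)
  exact ⟨l, hlt, hlle⟩

/-- Let `I ⊆ S = k[x_1,…,x_n]` be a stable monomial ideal with minimal
monomial generators `m_1, …, m_t` (exponent vectors `m : Fin t → (Fin n →₀ ℕ)`), listed in
decreasing lexicographic order.
(a) Every monomial `w ∈ I` can be written in exactly one way as `w = u·m_i` with
`max(supp(m_i)) ≤ min(supp(u))` (the Eliahou–Kervaire decomposition).
(b) If `j < max(supp(m_i))` and `x_j·m_i = u·m_κ` is the decomposition from (a), then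
`max(supp(m_κ)) ≤ max(supp(m_i))`; consequently `I` is crit-monotone:
`A_κ ⊆ A_i`, where `A_i = { g : x_g ∈ (m_1,…,m_{i−1}) : m_i }`. -/
theorem stmt_9 (k : Type) [Field k] (n t : ℕ)
    (m : Fin t → (Fin n →₀ ℕ))
    (hmin : ∀ i j : Fin t, i ≠ j → ¬ m i ≤ m j)
    (hstable : ∀ α : Fin n →₀ ℕ,
      monomial α (1 : k) ∈ Ideal.span (Set.range fun i => monomial (m i) (1 : k)) →
      ∀ b ∈ α.support, (∀ l ∈ α.support, l ≤ b) →
      ∀ i : Fin n, i < b →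
        monomial (α + Finsupp.single i 1 - Finsupp.single b 1) (1 : k) ∈
          Ideal.span (Set.range fun i => monomial (m i) (1 : k)))
    (hsort : ∀ i j : Fin t, i < j → toLex (m j) < toLex (m i)) :
    -- (a) existence and uniqueness of the Eliahou–Kervaire decomposition
    (∀ α : Fin n →₀ ℕ,
      monomial α (1 : k) ∈ Ideal.span (Set.range fun i => monomial (m i) (1 : k)) →
      ∃! p : Fin t × (Fin n →₀ ℕ),
        α = p.2 + m p.1 ∧ ∀ a ∈ (m p.1).support, ∀ b ∈ p.2.support, a ≤ b)
    ∧
    -- (b) the decomposition of `x_j·m_i` for `j < max(supp(m_i))` does not increase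
    -- `max(supp(−))`, and crit-monotonicity follows
    (∀ (i κ : Fin t) (j : Fin n) (β : Fin n →₀ ℕ),
      (∃ b ∈ (m i).support, (∀ l ∈ (m i).support, l ≤ b) ∧ j < b) →
      Finsupp.single j 1 + m i = β + m κ →
      (∀ a ∈ (m κ).support, ∀ c ∈ β.support, a ≤ c) →
      (∀ a ∈ (m κ).support, ∃ b ∈ (m i).support, a ≤ b)
      ∧
      {g : Fin n | (X g : MvPolynomial (Fin n) k) ∈
          Submodule.colon
            (Ideal.span ((fun l => monomial (m l) (1 : k)) '' {l | l < κ}))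
            (Ideal.span {monomial (m κ) (1 : k)})}
        ⊆
      {g : Fin n | (X g : MvPolynomial (Fin n) k) ∈
          Submodule.colon
            (Ideal.span ((fun l => monomial (m l) (1 : k)) '' {l | l < i}))
            (Ideal.span {monomial (m i) (1 : k)})}) := by
  have hrange : (Set.range fun i => monomial (m i) (1 : k))
      = (fun s => monomial s (1 : k)) '' Set.range m := by
    rw [← Set.range_comp]; rfl
  have memiff : ∀ α : Fin n →₀ ℕ,
      monomial α (1 : k) ∈ Ideal.span (Set.range fun i => monomial (m i) (1 : k)) ↔
        ∃ i, m i ≤ α := by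
    intro α
    rw [hrange, mono_mem_iff]
    simp
  have hstable' : ∀ γ : Fin n →₀ ℕ, (∃ i, m i ≤ γ) → ∀ b ∈ γ.support,
      (∀ l ∈ γ.support, l ≤ b) →
      ∀ jj : Fin n, jj < b → ∃ i, m i ≤ γ + Finsupp.single jj 1 - Finsupp.single b 1 := by
    intro γ hγ b hb hbmax jj hjj
    exact (memiff _).mp (hstable γ ((memiff γ).mpr hγ) b hb hbmax jj hjj)
  have hinj : ∀ i j : Fin t, m i = m j → i = j := by
    intro i j h
    by_contra hne
    exact hmin i j hne (le_of_eq h)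
  -- the colon membership characterization
  have hcolon : ∀ (κ : Fin t) (g : Fin n),
      ((X g : MvPolynomial (Fin n) k) ∈ Submodule.colon
          (Ideal.span ((fun l => monomial (m l) (1 : k)) '' {l | l < κ}))
          (Ideal.span {monomial (m κ) (1 : k)})) ↔
        ∃ l, l < κ ∧ m l ≤ Finsupp.single g 1 + m κ := by
    intro κ g
    rw [Ideal.mem_colon_span_singleton]
    have hX : (X g : MvPolynomial (Fin n) k) * monomial (m κ) (1 : k)
        = monomial (Finsupp.single g 1 + m κ) (1 : k) := by
      rw [monomial_single_add, pow_one]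
    rw [hX]
    have himg : ((fun l => monomial (m l) (1 : k)) '' {l | l < κ})
        = (fun s => monomial s (1 : k)) '' (m '' {l | l < κ}) := by
      rw [Set.image_image]
    rw [himg, mono_mem_iff]
    constructor
    · rintro ⟨s, ⟨l, hl, rfl⟩, hle⟩
      exact ⟨l, hl, hle⟩
    · rintro ⟨l, hl, hle⟩
      exact ⟨m l, ⟨l, hl, rfl⟩, hle⟩
  constructor
  · -- part (a)
    intro α hmem
    obtain ⟨i, hile, hEK⟩ := ek_exists m hstable' α ((memiff α).mp hmem)
    have hdecomp : α = (α - m i) + m i := (tsub_add_cancel_of_le hile).symm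
    refine ⟨(i, α - m i), ⟨hdecomp, hEK⟩, ?_⟩
    rintro ⟨j, γ⟩ ⟨hjeq, hjEK⟩
    have hij : j = i := by
      rcases lt_trichotomy (toLex (m j)) (toLex (m i)) with h | h | h
      · have heq2 : (α - m i) + m i = γ + m j := by rw [← hdecomp, hjeq]
        have hne : j ≠ i := fun hji => by rw [hji] at h; exact lt_irrefl _ h
        exact absurd (ek_subB m i j (α - m i) γ heq2 hjEK h) (hmin j i hne)
      · exact hinj j i (toLex_inj.mp h)
      · have heq2 : γ + m j = (α - m i) + m i := by rw [← hdecomp, hjeq]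
        have hne : i ≠ j := fun hij => by rw [hij] at h; exact lt_irrefl _ h
        exact absurd (ek_subB m j i γ (α - m i) heq2 hEK h) (hmin i j hne)
    subst hij
    have hγ : γ = α - m j := by
      have h1 : γ + m j = (α - m j) + m j := by rw [← hdecomp, hjeq]
      exact add_right_cancel h1
    rw [hγ]
  · -- part (b)
    intro i κ j β hmax heq hEKb
    obtain ⟨b, hbs, hbmax, hjb⟩ := hmax
    have hb1 : ∀ a ∈ (m κ).support, ∃ b' ∈ (m i).support, a ≤ b' := by
      intro a ha
      refine ⟨b, hbs, ?_⟩
      have hκa : 0 < (m κ) a := Nat.pos_of_ne_zero (Finsupp.mem_support_iff.mp ha)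
      have hαa : 0 < (Finsupp.single j 1 + m i : Fin n →₀ ℕ) a := by
        rw [heq, Finsupp.add_apply]
        omega
      rcases eq_or_ne a j with rfl | haj
      · exact hjb.le
      · have hia : 0 < (m i) a := by
          rw [Finsupp.add_apply, Finsupp.single_apply] at hαa
          simp [Ne.symm haj] at hαa
          exact hαa
        exact hbmax a (Finsupp.mem_support_iff.mpr (Nat.pos_iff_ne_zero.mp hia))
    refine ⟨hb1, ?_⟩
    intro g hg
    simp only [Set.mem_setOf_eq] at hg ⊢
    rw [hcolon] at hg
    obtain ⟨l, hlκ, hle⟩ := hg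
    obtain ⟨q, hgq, hqsupp⟩ := ek_C m hmin hsort κ l g hlκ hle
    obtain ⟨b', hb's, hqb'⟩ := hb1 q hqsupp
    obtain ⟨l', hl'i, hle'⟩ := ek_D m hmin hsort hstable' i g b' hb's
      (lt_of_lt_of_le hgq hqb')
    rw [hcolon]
    exact ⟨l', hl'i, hle'⟩
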